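/- arXiv:1707.03342 — 2 statements merged into one kernel-verified Lean document; each statement's English description precedes it below -/
import Mathlib

section
/- Let α < 0 < β, 0 < ε < 8/(β−α), and let p < q with ℓ := q − p ≥ ε. Then there exist v ∈ ℝ and a Lipschitz function n : [p,q] → [−1,1] with n(p) = n(q) = 1 and n'(x) = v − g(x/ε) for almost every x ∈ [p,q] if and only if p ∈ ε(1/4 + ℤ) and q ∈ ε(1/4 + ℤ); moreover, in that case necessarily v = (α+β)/2. -/
open MeasureTheory Set
open Filter

/-- The 1-periodic forcing term: `α` within distance `1/4` of the integers, `β` otherwise. -/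
noncomputable def g (α β x : ℝ) : ℝ := if |x - (round x : ℝ)| ≤ 1/4 then α else β

/-- The edge `[p,q]` with endpoint values `a`, `b` is calibrated with velocity `v` by the
Lipschitz field `n : [p,q] → [-1,1]` satisfying `n' = v - g(·/ε)` a.e. on `[p,q]`. -/
def Calibrates (α β ε p q a b v : ℝ) (n : ℝ → ℝ) : Prop :=
  (∃ K : NNReal, LipschitzOnWith K n (Icc p q)) ∧
  (∀ x ∈ Icc p q, n x ∈ Icc (-1 : ℝ) 1) ∧
  n p = a ∧ n q = b ∧
  ∀ᵐ x ∂(volume.restrict (Icc p q)), HasDerivAt n (v - g α β (x / ε)) x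


lemma slope_tendsto_right {f : ℝ → ℝ} {x d : ℝ} (hf : HasDerivAt f d x) :
    Tendsto (fun h : ℝ => (f (x + h) - f x) / h) (nhdsWithin 0 (Ioi 0)) (nhds d) := by
  have h1 := hasDerivAt_iff_tendsto_slope.1 hf
  have h2 : Tendsto (fun h : ℝ => x + h) (nhdsWithin 0 (Ioi 0)) (nhdsWithin x {x}ᶜ) := by
    apply tendsto_nhdsWithin_of_tendsto_nhds_of_eventually_within
    · have : Tendsto (fun h : ℝ => x + h) (nhds 0) (nhds (x + 0)) :=
        (continuous_const.add continuous_id).tendsto 0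
      simpa using this.mono_left nhdsWithin_le_nhds
    · filter_upwards [self_mem_nhdsWithin] with h (hh : 0 < h)
      simp [ne_of_gt hh]
  have := h1.comp h2
  refine this.congr fun h => ?_
  simp [slope_def_field, add_sub_cancel_left]

theorem lipschitz_ae_ftc {n φ : ℝ → ℝ} {K : NNReal} {a b : ℝ} (hab : a ≤ b)
    (hn : LipschitzOnWith K n (Icc a b))
    (hd : ∀ᵐ x ∂(volume.restrict (Icc a b)), HasDerivAt n (φ x) x) :
    n b - n a = ∫ x in a..b, φ x := by
  obtain ⟨N, hN, hEq⟩ := hn.extend_real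
  have hNc : Continuous N := hN.continuous
  set μ := volume.restrict (Ioo a b) with hμ
  -- a.e. derivative for N on Ioo
  have hdN : ∀ᵐ x ∂μ, HasDerivAt N (φ x) x := by
    have hmono : μ ≤ volume.restrict (Icc a b) :=
      Measure.restrict_mono Ioo_subset_Icc_self le_rfl
    have hd' : ∀ᵐ x ∂μ, HasDerivAt n (φ x) x := hd.filter_mono (ae_mono hmono)
    filter_upwards [hd', ae_restrict_mem measurableSet_Ioo] with x hx hxm
    apply hx.congr_of_eventuallyEq
    filter_upwards [Icc_mem_nhds hxm.1 hxm.2] with y hy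
    exact (hEq hy).symm
  set F : ℝ → ℝ → ℝ := fun h x => (N (x + h) - N x) / h with hF
  -- dominated convergence
  have hDCT : Tendsto (fun h => ∫ x, F h x ∂μ) (nhdsWithin 0 (Ioi 0))
      (nhds (∫ x, φ x ∂μ)) := by
    apply tendsto_integral_filter_of_dominated_convergence (fun _ => (K : ℝ))
    · filter_upwards with h
      exact ((hNc.comp (continuous_id.add continuous_const)).sub hNc).div_const h
        |>.aestronglyMeasurable
    · filter_upwards [self_mem_nhdsWithin] with h (hh : 0 < h)
      filter_upwards with x
      have := hN.dist_le_mul (x + h) x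
      simp only [Real.dist_eq, add_sub_cancel_left] at this
      rw [Real.norm_eq_abs, hF, abs_div, abs_of_pos hh]
      rw [div_le_iff₀ hh]
      simpa [abs_of_pos hh, Real.dist_eq, mul_comm] using this
    · exact (integrableOn_const (by simp [Real.volume_Ioo]))
    · filter_upwards [hdN] with x hx
      exact slope_tendsto_right hx
  -- explicit computation of ∫ F h for h > 0
  have hint : ∀ u v : ℝ, IntervalIntegrable N volume u v := fun u v =>
    hNc.intervalIntegrable u v
  have hcomp : ∀ᶠ h in nhdsWithin 0 (Ioi 0), (∫ x, F h x ∂μ)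
      = (1/h) * (∫ x in b..(b+h), N x) - (1/h) * (∫ x in a..(a+h), N x) := by
    filter_upwards [self_mem_nhdsWithin] with h (hh : 0 < h)
    have e1 : (∫ x, F h x ∂μ) = ∫ x in a..b, F h x := by
      rw [intervalIntegral.integral_of_le hab, integral_Ioc_eq_integral_Ioo]
    rw [e1, hF]
    simp only
    rw [intervalIntegral.integral_div]
    have e2 : (∫ x in a..b, (N (x + h) - N x))
        = (∫ x in a..b, N (x+h)) - ∫ x in a..b, N x := by
      apply intervalIntegral.integral_sub
      · exact ((hNc.comp (continuous_id.add continuous_const)).intervalIntegrable a b)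
      · exact hint a b
    rw [e2, intervalIntegral.integral_comp_add_right]
    have e3 : (∫ x in (a+h)..(b+h), N x)
        = (∫ x in (a+h)..b, N x) + ∫ x in b..(b+h), N x :=
      (intervalIntegral.integral_add_adjacent_intervals (hint _ _) (hint _ _)).symm
    have e4 : (∫ x in a..b, N x)
        = (∫ x in a..(a+h), N x) + ∫ x in (a+h)..b, N x :=
      (intervalIntegral.integral_add_adjacent_intervals (hint _ _) (hint _ _)).symm
    rw [e3, e4]
    field_simp
    ring
  -- FTC-1 limits
  have hlim : ∀ c : ℝ, Tendsto (fun h => (1/h) * (∫ x in c..(c+h), N x))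
      (nhdsWithin 0 (Ioi 0)) (nhds (N c)) := by
    intro c
    have hD : HasDerivAt (fun u => ∫ x in c..u, N x) (N c) c :=
      (hNc.integral_hasStrictDerivAt c c).hasDerivAt
    have := slope_tendsto_right hD
    simp only [intervalIntegral.integral_same, sub_zero] at this
    refine this.congr fun h => ?_
    rw [one_div, inv_mul_eq_div]
  have hlim2 : Tendsto (fun h => ∫ x, F h x ∂μ) (nhdsWithin 0 (Ioi 0))
      (nhds (N b - N a)) := by
    exact Tendsto.congr' (hcomp.mono fun h e => e.symm) ((hlim b).sub (hlim a))
  have huniq : (∫ x, φ x ∂μ) = N b - N a := tendsto_nhds_unique hDCT hlim2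
  have ea : N a = n a := (hEq (left_mem_Icc.2 hab)).symm
  have eb : N b = n b := (hEq (right_mem_Icc.2 hab)).symm
  rw [intervalIntegral.integral_of_le hab, integral_Ioc_eq_integral_Ioo, huniq, ea, eb]

lemma measurable_g (α β : ℝ) : Measurable (g α β) := by
  unfold g
  apply Measurable.ite _ measurable_const measurable_const
  have hr : Measurable (fun x : ℝ => (round x : ℝ)) := by
    have h1 : Measurable (fun x : ℝ => (⌊x + 1/2⌋ : ℤ)) :=
      Int.measurable_floor.comp (measurable_add_const _)
    have h2 : Measurable (fun n : ℤ => (n : ℝ)) := measurable_from_top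
    have h3 : (fun x : ℝ => (round x : ℝ)) = (fun n : ℤ => (n : ℝ)) ∘ (fun x : ℝ => ⌊x + 1/2⌋) := by
      funext x; simp [round_eq]
    rw [h3]; exact h2.comp h1
  exact measurableSet_le ((measurable_id.sub hr).abs) measurable_const

lemma round_eq_of_abs_le {x : ℝ} {k : ℤ} (h : |x - k| ≤ 1/4) : round x = k := by
  obtain ⟨ha, hb⟩ := abs_le.1 h
  have h2 : round x = round ((k : ℝ) + (x - k)) := by ring_nf
  rw [h2, round_intCast_add]
  have h3 : round (x - (k:ℝ)) = 0 := by
    rw [round_eq]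
    apply Int.floor_eq_zero_iff.2
    constructor <;> simp <;> linarith
  omega

lemma g_eq_alpha {α β x : ℝ} {k : ℤ} (h : |x - k| ≤ 1/4) : g α β x = α := by
  unfold g
  rw [round_eq_of_abs_le h, if_pos h]

lemma g_eq_beta {α β x : ℝ} {k : ℤ} (h1 : (k:ℝ) + 1/4 < x) (h2 : x < k + 3/4) : g α β x = β := by
  unfold g
  rw [if_neg]
  push_neg
  rcases le_or_gt (round x) k with h | h
  · have hc : (round x : ℝ) ≤ k := by exact_mod_cast h
    rw [abs_of_pos (by linarith)]; linarith
  · have hc : (k:ℝ) + 1 ≤ round x := by exact_mod_cast h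
    rw [abs_of_neg (by linarith), neg_sub]; linarith


section PhiLemmas
variable {α β ε v : ℝ}
lemma phi_intervalIntegrable (x y : ℝ) :
    IntervalIntegrable (fun t => v - g α β (t/ε)) volume x y := by
  rw [intervalIntegrable_iff]
  apply Integrable.mono' (g := fun _ => |v - α| + |v - β|)
    (integrableOn_const measure_Ioc_lt_top.ne)
  · exact ((measurable_const.sub ((measurable_g α β).comp (measurable_id.div_const ε))).aestronglyMeasurable)
  · filter_upwards with t
    rw [Real.norm_eq_abs]
    rcases le_or_gt |t/ε - (round (t/ε) : ℝ)| (1/4) with h | h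
    · rw [show g α β (t/ε) = α from if_pos h]
      have := abs_nonneg (v - β); have := le_abs_self (v - α); have := neg_abs_le (v - α); linarith
    · rw [show g α β (t/ε) = β from if_neg (not_le.2 h)]
      have := abs_nonneg (v - α); have := le_abs_self (v - β); have := neg_abs_le (v - β); linarith


lemma ae_ne (c : ℝ) : ∀ᵐ t : ℝ ∂volume, t ≠ c := by
  refine ae_iff.2 ?_
  simpa using measure_singleton c

lemma int_alpha (hε0 : 0 < ε) {x y : ℝ} (k : ℤ) (hxy : x ≤ y)
    (hx : ε * (k - 1/4) ≤ x) (hy : y ≤ ε * (k + 1/4)) :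
    ∫ t in x..y, (v - g α β (t/ε)) = (v - α) * (y - x) := by
  rw [intervalIntegral.integral_congr (g := fun _ => v - α)]
  · simp [smul_eq_mul]; ring
  · intro t ht
    rw [uIcc_of_le hxy] at ht
    have h1 : ε * (k - 1/4) ≤ t := le_trans hx ht.1
    have h2 : t ≤ ε * (k + 1/4) := le_trans ht.2 hy
    have : |t/ε - (k:ℝ)| ≤ 1/4 := by
      rw [abs_le]
      have e1 : (k:ℝ) - 1/4 ≤ t/ε := by rw [le_div_iff₀ hε0]; linarith
      have e2 : t/ε ≤ (k:ℝ) + 1/4 := by rw [div_le_iff₀ hε0]; linarith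
      constructor <;> linarith
    show v - g α β (t/ε) = v - α
    rw [g_eq_alpha this]

lemma int_beta (hε0 : 0 < ε) {x y : ℝ} (k : ℤ) (hxy : x ≤ y)
    (hx : ε * (k + 1/4) ≤ x) (hy : y ≤ ε * (k + 3/4)) :
    ∫ t in x..y, (v - g α β (t/ε)) = (v - β) * (y - x) := by
  rw [intervalIntegral.integral_congr_ae (g := fun _ => v - β)]
  · simp [smul_eq_mul]; ring
  · filter_upwards [ae_ne (ε * (k + 3/4))] with t htne ht
    rw [uIoc_of_le hxy] at ht
    have h1 : ε * (k + 1/4) < t := lt_of_le_of_lt hx ht.1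
    have h2 : t ≤ ε * (k + 3/4) := le_trans ht.2 hy
    have h2' : t < ε * (k + 3/4) := lt_of_le_of_ne h2 htne
    have hb1 : (k:ℝ) + 1/4 < t/ε := by
      rw [lt_div_iff₀ hε0]; linarith [h1]
    have hb2 : t/ε < (k:ℝ) + 3/4 := by
      rw [div_lt_iff₀ hε0]; linarith [h2']
    show v - g α β (t/ε) = v - β
    rw [g_eq_beta hb1 hb2]

lemma g_periodic : Function.Periodic (g α β) 1 := by
  intro y
  unfold g
  have : round (y + (1:ℝ)) = round y + 1 := by
    have := round_add_intCast y 1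
    simpa using this
  rw [this]
  push_cast
  ring_nf

lemma phi_periodic (hε0 : 0 < ε) :
    Function.Periodic (fun t => v - g α β (t/ε)) ε := by
  intro t
  simp only
  rw [add_div, div_self (ne_of_gt hε0), g_periodic (t/ε)]

lemma int_period (hε0 : 0 < ε) (x : ℝ) :
    ∫ t in x..(x+ε), (v - g α β (t/ε)) = ε * (v - (α+β)/2) := by
  have hper := phi_periodic (α := α) (β := β) (v := v) hε0
  have := hper.intervalIntegral_add_eq x (-(ε/4))
  rw [this]
  have hsplit : ∫ t in (-(ε/4))..(-(ε/4)+ε), (v - g α β (t/ε))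
      = (∫ t in (-(ε/4))..(ε/4), (v - g α β (t/ε)))
        + ∫ t in (ε/4)..(-(ε/4)+ε), (v - g α β (t/ε)) :=
    (intervalIntegral.integral_add_adjacent_intervals
      (phi_intervalIntegrable _ _) (phi_intervalIntegrable _ _)).symm
  rw [hsplit]
  have h1 : ∫ t in (-(ε/4))..(ε/4), (v - g α β (t/ε)) = (v - α) * (ε/2) := by
    have := int_alpha (α := α) (β := β) (v := v) (x := -(ε/4)) (y := ε/4) hε0 (0 : ℤ) (by linarith) (by push_cast; ring_nf; linarith) (by push_cast; ring_nf; linarith)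
    rw [this]; ring_nf
  have h2 : ∫ t in (ε/4)..(-(ε/4)+ε), (v - g α β (t/ε)) = (v - β) * (ε/2) := by
    have := int_beta (α := α) (β := β) (v := v) (x := ε/4) (y := -(ε/4)+ε) hε0 (0 : ℤ) (by linarith) (by push_cast; linarith) (by push_cast; linarith)
    rw [this]; ring_nf
  rw [h1, h2]; ring

end PhiLemmas

section Main
variable {α β ε p q v : ℝ} {n : ℝ → ℝ}

lemma calib_diff (hcal : Calibrates α β ε p q 1 1 v n) {x y : ℝ}
    (hx : p ≤ x) (hxy : x ≤ y) (hy : y ≤ q) :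
    n y - n x = ∫ t in x..y, (v - g α β (t/ε)) := by
  obtain ⟨⟨K, hK⟩, hrange, hnp, hnq, hae⟩ := hcal
  refine lipschitz_ae_ftc hxy (hK.mono (Icc_subset_Icc hx hy)) ?_
  exact hae.filter_mono (ae_mono (Measure.restrict_mono (Icc_subset_Icc hx hy) le_rfl))

lemma calib_period (hε0 : 0 < ε) (hcal : Calibrates α β ε p q 1 1 v n) {x : ℝ}
    (hx : p ≤ x) (hx2 : x + ε ≤ q) :
    n (x + ε) - n x = ε * (v - (α+β)/2) := by
  rw [calib_diff hcal hx (by linarith) hx2, int_period hε0]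

lemma calib_velocity (hε0 : 0 < ε) (hpq : p < q) (hl : ε ≤ q - p)
    (hcal : Calibrates α β ε p q 1 1 v n) : v = (α + β) / 2 := by
  obtain hrange := hcal.2.1
  obtain hnp := hcal.2.2.1
  obtain hnq := hcal.2.2.2.1
  have h1 : n (p + ε) - n p = ε * (v - (α+β)/2) :=
    calib_period hε0 hcal le_rfl (by linarith)
  have h2 : n q - n (q - ε) = ε * (v - (α+β)/2) := by
    have := calib_period hε0 hcal (x := q - ε) (by linarith) (by linarith)
    simpa using this
  have hb1 : n (p + ε) ≤ 1 := (hrange _ ⟨by linarith, by linarith⟩).2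
  have hb2 : n (q - ε) ≤ 1 := (hrange _ ⟨by linarith, by linarith⟩).2
  rw [hnp] at h1; rw [hnq] at h2
  nlinarith [h1, h2, hb1, hb2]

lemma calib_quarter_p (hα : α < 0) (hβ : 0 < β) (hε0 : 0 < ε) (hpq : p < q)
    (hl : ε ≤ q - p) (hcal : Calibrates α β ε p q 1 1 v n)
    (hv : v = (α + β) / 2) : ∃ k : ℤ, p = ε * (1/4 + k) := by
  obtain hrange := hcal.2.1
  obtain hnp := hcal.2.2.1
  set t : ℝ := p/ε - 1/4 with ht
  set k : ℤ := ⌊t⌋ with hk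
  set θ : ℝ := Int.fract t with hθ
  have hkt : (k:ℝ) + θ = t := by rw [hθ, hk]; exact Int.floor_add_fract t
  have hteq : p = ε * (1/4 + t) := by
    rw [ht]; field_simp; ring
  by_cases hθ0 : θ = 0
  · refine ⟨k, ?_⟩
    rw [hteq, ← hkt, hθ0]; ring
  exfalso
  have θpos : 0 < θ := lt_of_le_of_ne (Int.fract_nonneg t) (Ne.symm hθ0)
  have θlt : θ < 1 := Int.fract_lt_one t
  have hp : p = ε * ((k:ℝ) + 1/4 + θ) := by
    rw [hteq, ← hkt]; ring
  have hvα : v - α = (β - α)/2 := by rw [hv]; ring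
  have hvβ : v - β = (α - β)/2 := by rw [hv]; ring
  rcases le_or_gt θ (1/2) with hhalf | hhalf
  · -- p in the interior of a β-interval (or at its right end)
    have hpx2 : p ≤ ε * ((k:ℝ) + 1 + 1/4) := by rw [hp]; nlinarith
    have hx2z : ε * ((k:ℝ) + 1 + 1/4) ≤ p + ε := by rw [hp]; nlinarith
    have hzq : p + ε ≤ q := by linarith
    have hnz : n (p + ε) = 1 := by
      have := calib_period hε0 hcal (x := p) le_rfl (by linarith)
      rw [hnp, hv] at this
      linarith [this]
    have hdiff : n (p + ε) - n (ε * ((k:ℝ) + 1 + 1/4))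
        = (v - β) * ((p + ε) - ε * ((k:ℝ) + 1 + 1/4)) := by
      rw [calib_diff hcal hpx2 hx2z hzq]
      refine int_beta hε0 (k+1) hx2z ?_ ?_
      · push_cast; ring_nf; exact le_rfl
      · push_cast; rw [hp]; nlinarith
    have hzx2 : (p + ε) - ε * ((k:ℝ) + 1 + 1/4) = ε * θ := by rw [hp]; ring
    have hb : n (ε * ((k:ℝ) + 1 + 1/4)) ≤ 1 := (hrange _ ⟨hpx2, le_trans hx2z hzq⟩).2
    rw [hnz, hzx2, hvβ] at hdiff
    linarith [hdiff, hb, mul_neg_of_neg_of_pos (show α - β < 0 by linarith) (mul_pos hε0 θpos)]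
  · -- p in the interior of an α-interval
    have hpx1 : p ≤ ε * ((k:ℝ) + 1 + 1/4) := by rw [hp]; nlinarith
    have hx1q : ε * ((k:ℝ) + 1 + 1/4) ≤ q := by
      have h9 : ε * ((k:ℝ) + 1 + 1/4) - p ≤ ε := by rw [hp]; nlinarith
      linarith
    have hdiff : n (ε * ((k:ℝ) + 1 + 1/4)) - n p
        = (v - α) * (ε * ((k:ℝ) + 1 + 1/4) - p) := by
      rw [calib_diff hcal le_rfl hpx1 hx1q]
      refine int_alpha hε0 (k+1) hpx1 ?_ ?_
      · push_cast; rw [hp]; nlinarith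
      · push_cast; ring_nf; exact le_rfl
    have hx1p : ε * ((k:ℝ) + 1 + 1/4) - p = ε * (1 - θ) := by rw [hp]; ring
    have hb : n (ε * ((k:ℝ) + 1 + 1/4)) ≤ 1 := (hrange _ ⟨hpx1, hx1q⟩).2
    rw [hnp, hx1p, hvα] at hdiff
    linarith [hdiff, hb, mul_pos (show (0:ℝ) < β - α by linarith) (mul_pos hε0 (show (0:ℝ) < 1 - θ by linarith))]

lemma calib_quarter_q (hα : α < 0) (hβ : 0 < β) (hε0 : 0 < ε) (hpq : p < q)
    (hl : ε ≤ q - p) (hcal : Calibrates α β ε p q 1 1 v n)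
    (hv : v = (α + β) / 2) : ∃ k : ℤ, q = ε * (1/4 + k) := by
  obtain hrange := hcal.2.1
  obtain hnq := hcal.2.2.2.1
  set t : ℝ := q/ε - 1/4 with ht
  set k : ℤ := ⌊t⌋ with hk
  set θ : ℝ := Int.fract t with hθ
  have hkt : (k:ℝ) + θ = t := by rw [hθ, hk]; exact Int.floor_add_fract t
  have hteq : q = ε * (1/4 + t) := by rw [ht]; field_simp; ring
  by_cases hθ0 : θ = 0
  · refine ⟨k, ?_⟩
    rw [hteq, ← hkt, hθ0]; ring
  exfalso
  have θpos : 0 < θ := lt_of_le_of_ne (Int.fract_nonneg t) (Ne.symm hθ0)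
  have θlt : θ < 1 := Int.fract_lt_one t
  have hq : q = ε * ((k:ℝ) + 1/4 + θ) := by rw [hteq, ← hkt]; ring
  have hvα : v - α = (β - α)/2 := by rw [hv]; ring
  have hvβ : v - β = (α - β)/2 := by rw [hv]; ring
  rcases le_or_gt θ (1/2) with hhalf | hhalf
  · -- q in a β-interval
    have hyq : ε * ((k:ℝ) + 1/4) ≤ q := by rw [hq]; nlinarith
    have hpy : p ≤ ε * ((k:ℝ) + 1/4) := by
      have h9 : q - ε * ((k:ℝ) + 1/4) ≤ ε := by rw [hq]; nlinarith
      linarith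
    have hdiff : n q - n (ε * ((k:ℝ) + 1/4)) = (v - β) * (q - ε * ((k:ℝ) + 1/4)) := by
      rw [calib_diff hcal hpy hyq le_rfl]
      refine int_beta hε0 k hyq le_rfl ?_
      · rw [hq]; nlinarith
    have hqy : q - ε * ((k:ℝ) + 1/4) = ε * θ := by rw [hq]; ring
    have hb : n (ε * ((k:ℝ) + 1/4)) ≤ 1 := (hrange _ ⟨hpy, hyq⟩).2
    rw [hnq, hqy, hvβ] at hdiff
    linarith [hdiff, hb, mul_neg_of_neg_of_pos (show α - β < 0 by linarith) (mul_pos hε0 θpos)]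
  · -- q in an α-interval
    have hpw : p ≤ q - ε := by linarith
    have hnw : n (q - ε) = 1 := by
      have := calib_period hε0 hcal (x := q - ε) hpw (by linarith)
      rw [hv] at this
      have hwq : q - ε + ε = q := by ring
      rw [hwq, hnq] at this; linarith
    have hwy : q - ε ≤ ε * ((k:ℝ) + 1/4) := by rw [hq]; nlinarith
    have hyq : ε * ((k:ℝ) + 1/4) ≤ q := by rw [hq]; nlinarith
    have hdiff : n (ε * ((k:ℝ) + 1/4)) - n (q - ε)
        = (v - α) * (ε * ((k:ℝ) + 1/4) - (q - ε)) := by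
      rw [calib_diff hcal hpw hwy hyq]
      refine int_alpha hε0 k hwy ?_ le_rfl
      · rw [hq]; nlinarith
    have hyw : ε * ((k:ℝ) + 1/4) - (q - ε) = ε * (1 - θ) := by rw [hq]; ring
    have hb : n (ε * ((k:ℝ) + 1/4)) ≤ 1 := (hrange _ ⟨le_trans hpw hwy, hyq⟩).2
    rw [hnw, hyw, hvα] at hdiff
    linarith [hdiff, hb, mul_pos (show (0:ℝ) < β - α by linarith) (mul_pos hε0 (show (0:ℝ) < 1 - θ by linarith))]

lemma distRound_lipschitz (s t : ℝ) :
    |(|s - (round s : ℝ)|) - (|t - (round t : ℝ)|)| ≤ |s - t| := by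
  rw [abs_sub_le_iff]
  constructor
  · have h1 : |s - (round s : ℝ)| ≤ |s - (round t : ℝ)| := round_le s (round t)
    have h2 : |s - (round t : ℝ)| ≤ |s - t| + |t - (round t : ℝ)| := by
      have := abs_add_le (s - t) (t - (round t : ℝ))
      simpa [sub_add_sub_cancel] using this
    linarith
  · have h1 : |t - (round t : ℝ)| ≤ |t - (round s : ℝ)| := round_le t (round s)
    have h2 : |t - (round s : ℝ)| ≤ |t - s| + |s - (round s : ℝ)| := by
      have := abs_add_le (t - s) (s - (round s : ℝ))
      simpa [sub_add_sub_cancel] using this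
    rw [abs_sub_comm t s] at h2
    linarith

lemma calib_exists (hα : α < 0) (hβ : 0 < β) (hε0 : 0 < ε) (hε : ε < 8 / (β - α))
    (hpq : p < q) (hp : ∃ k : ℤ, p = ε * (1/4 + k)) (hq : ∃ k : ℤ, q = ε * (1/4 + k)) :
    Calibrates α β ε p q 1 1 ((α+β)/2)
      (fun x => 1 - ((β-α)/2) * ε * |x/ε - 1/4 - (round (x/ε - 1/4) : ℝ)|) := by
  have hβα : (0:ℝ) < β - α := by linarith
  set c : ℝ := (β-α)/2 with hc
  have hc0 : 0 < c := by rw [hc]; linarith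
  have hcε : c * ε < 4 := by
    have := (lt_div_iff₀ hβα).1 hε
    rw [hc]; nlinarith
  set n : ℝ → ℝ := fun x => 1 - c * ε * |x/ε - 1/4 - (round (x/ε - 1/4) : ℝ)| with hn
  have hval1 : ∀ r : ℝ, (∃ k : ℤ, r = ε * (1/4 + k)) → n r = 1 := by
    rintro r ⟨k, hk⟩
    have h1 : r/ε - 1/4 = (k:ℝ) := by rw [hk]; field_simp; ring
    rw [hn]; simp only [h1, round_intCast]
    simp
  refine ⟨⟨Real.toNNReal c, ?_⟩, ?_, hval1 p hp, hval1 q hq, ?_⟩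
  · -- Lipschitz
    apply LipschitzWith.lipschitzOnWith
    apply LipschitzWith.of_dist_le_mul
    intro x y
    rw [Real.dist_eq, Real.dist_eq, Real.coe_toNNReal c hc0.le, hn]
    simp only
    have h1 : (1 - c * ε * |x/ε - 1/4 - (round (x/ε - 1/4) : ℝ)|)
        - (1 - c * ε * |y/ε - 1/4 - (round (y/ε - 1/4) : ℝ)|)
        = c * ε * (|y/ε - 1/4 - (round (y/ε - 1/4) : ℝ)| - |x/ε - 1/4 - (round (x/ε - 1/4) : ℝ)|) := by
      ring
    rw [h1, abs_mul, abs_of_pos (by positivity : (0:ℝ) < c * ε), abs_sub_comm]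
    have h2 : |(|x/ε - 1/4 - (round (x/ε - 1/4) : ℝ)|) - (|y/ε - 1/4 - (round (y/ε - 1/4) : ℝ)|)|
        ≤ |(x/ε - 1/4) - (y/ε - 1/4)| := distRound_lipschitz _ _
    have h3 : |(x/ε - 1/4) - (y/ε - 1/4)| = |x - y| / ε := by
      rw [show (x/ε - 1/4) - (y/ε - 1/4) = (x - y)/ε by ring, abs_div, abs_of_pos hε0]
    rw [h3] at h2
    calc c * ε * |(|x/ε - 1/4 - (round (x/ε - 1/4) : ℝ)|) - (|y/ε - 1/4 - (round (y/ε - 1/4) : ℝ)|)|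
        ≤ c * ε * (|x - y| / ε) := by
          apply mul_le_mul_of_nonneg_left h2 (by positivity)
      _ = c * |x - y| := by field_simp
  · -- range
    intro x hx
    have habs : |x/ε - 1/4 - (round (x/ε - 1/4) : ℝ)| ≤ 1/2 := abs_sub_round _
    have habs0 : 0 ≤ |x/ε - 1/4 - (round (x/ε - 1/4) : ℝ)| := abs_nonneg _
    constructor
    · have : c * ε * |x/ε - 1/4 - (round (x/ε - 1/4) : ℝ)| ≤ c * ε * (1/2) :=
        mul_le_mul_of_nonneg_left habs (by positivity)
      rw [hn]; simp only; nlinarith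
    · rw [hn]; simp only; nlinarith [mul_nonneg (mul_nonneg hc0.le hε0.le) habs0]
  · -- a.e. derivative
    have hS : ∀ᵐ x : ℝ ∂volume, x ∉ Set.range (fun j : ℤ => ε * (1/4 + (j:ℝ)/2)) := by
      have h0 : volume (Set.range fun j : ℤ => ε * (1/4 + (j:ℝ)/2)) = 0 :=
        (Set.countable_range _).measure_zero _
      exact measure_eq_zero_iff_ae_notMem.1 h0
    apply ae_restrict_of_ae
    filter_upwards [hS] with x hx
    set t : ℝ := x/ε - 1/4 with htd
    set k : ℤ := ⌊t⌋ with hkd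
    set θ : ℝ := Int.fract t with hθd
    have hkt : (k:ℝ) + θ = t := by rw [hθd, hkd]; exact Int.floor_add_fract t
    have hxt : x = ε * (1/4 + t) := by rw [htd]; field_simp; ring
    have hθ0 : θ ≠ 0 := by
      intro h0
      apply hx
      exact ⟨2*k, by push_cast; rw [hxt, ← hkt, h0]; ring⟩
    have hθh : θ ≠ 1/2 := by
      intro h0
      apply hx
      exact ⟨2*k+1, by push_cast; rw [hxt, ← hkt, h0]; ring⟩
    have θpos : 0 < θ := lt_of_le_of_ne (Int.fract_nonneg t) (Ne.symm hθ0)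
    have θlt : θ < 1 := Int.fract_lt_one t
    rcases lt_or_gt_of_ne hθh with hhalf | hhalf
    · -- β-interval : slope -c
      have hgβ : g α β (x/ε) = β := by
        refine g_eq_beta (k := k) ?_ ?_
        · rw [htd] at hkt; nlinarith [hkt]
        · rw [htd] at hkt; nlinarith [hkt]
      have hA : HasDerivAt (fun y : ℝ => 1 - c * (y - ε * (1/4 + (k:ℝ)))) (-c) x := by
        have h1 := (((hasDerivAt_id x).sub_const (ε * (1/4 + (k:ℝ)))).const_mul c).const_sub 1
        simpa using h1
      have hev : n =ᶠ[nhds x] (fun y : ℝ => 1 - c * (y - ε * (1/4 + (k:ℝ)))) := by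
        have hUopen : IsOpen ((fun y : ℝ => y/ε - 1/4) ⁻¹' Ioo (k:ℝ) ((k:ℝ) + 1/2)) :=
          isOpen_Ioo.preimage ((continuous_id.div_const ε).sub continuous_const)
        have hxU : x ∈ (fun y : ℝ => y/ε - 1/4) ⁻¹' Ioo (k:ℝ) ((k:ℝ) + 1/2) := by
          constructor
          · show (k:ℝ) < x/ε - 1/4
            rw [← htd, ← hkt]; linarith
          · show x/ε - 1/4 < (k:ℝ) + 1/2
            rw [← htd, ← hkt]; linarith
        filter_upwards [hUopen.mem_nhds hxU] with y hy
        obtain ⟨hy1, hy2⟩ := hy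
        have hry : round (y/ε - 1/4) = k := by
          rw [round_eq]
          apply Int.floor_eq_iff.2
          constructor
          · push_cast; linarith [hy1]
          · push_cast; linarith [hy2]
        rw [hn]; simp only [hry]
        rw [abs_of_pos (by linarith [hy1] : (0:ℝ) < y/ε - 1/4 - (k:ℝ))]
        have he : ε * (y/ε - 1/4 - (k:ℝ)) = y - ε * (1/4 + (k:ℝ)) := by
          field_simp; ring
        rw [show c * ε * (y/ε - 1/4 - (k:ℝ)) = c * (ε * (y/ε - 1/4 - (k:ℝ))) by ring, he]
      have := hA.congr_of_eventuallyEq hev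
      refine this.congr_deriv ?_
      rw [hgβ, hc]; ring
    · -- α-interval : slope +c
      have hgα : g α β (x/ε) = α := by
        refine g_eq_alpha (k := k + 1) ?_
        push_cast
        rw [show x/ε = t + 1/4 by rw [htd]; ring, ← hkt, abs_le]
        constructor <;> nlinarith
      have hA : HasDerivAt (fun y : ℝ => 1 - c * (ε * ((k:ℝ) + 5/4) - y)) c x := by
        have h1 := (((hasDerivAt_id x).const_sub (ε * ((k:ℝ) + 5/4))).const_mul c).const_sub 1
        simpa using h1
      have hev : n =ᶠ[nhds x] (fun y : ℝ => 1 - c * (ε * ((k:ℝ) + 5/4) - y)) := by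
        have hUopen : IsOpen ((fun y : ℝ => y/ε - 1/4) ⁻¹' Ioo ((k:ℝ) + 1/2) ((k:ℝ) + 1)) :=
          isOpen_Ioo.preimage ((continuous_id.div_const ε).sub continuous_const)
        have hxU : x ∈ (fun y : ℝ => y/ε - 1/4) ⁻¹' Ioo ((k:ℝ) + 1/2) ((k:ℝ) + 1) := by
          constructor
          · show (k:ℝ) + 1/2 < x/ε - 1/4
            rw [← htd, ← hkt]; linarith
          · show x/ε - 1/4 < (k:ℝ) + 1
            rw [← htd, ← hkt]; linarith
        filter_upwards [hUopen.mem_nhds hxU] with y hy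
        obtain ⟨hy1, hy2⟩ := hy
        have hry : round (y/ε - 1/4) = k + 1 := by
          rw [round_eq]
          apply Int.floor_eq_iff.2
          constructor
          · push_cast; linarith [hy1]
          · push_cast; linarith [hy2]
        rw [hn]; simp only [hry]
        push_cast
        rw [abs_of_neg (by linarith [hy2] : y/ε - 1/4 - ((k:ℝ) + 1) < 0)]
        have he : ε * (((k:ℝ) + 1) - (y/ε - 1/4)) = ε * ((k:ℝ) + 5/4) - y := by
          field_simp; ring
        rw [show c * ε * -(y/ε - 1/4 - ((k:ℝ) + 1)) = c * (ε * (((k:ℝ) + 1) - (y/ε - 1/4))) by ring, he]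
      have := hA.congr_of_eventuallyEq hev
      refine this.congr_deriv ?_
      rw [hgα, hc]; ring

end Main

theorem stmt0 (α β ε p q : ℝ) (hα : α < 0) (hβ : 0 < β)
    (hε0 : 0 < ε) (hε : ε < 8 / (β - α)) (hpq : p < q) (hl : ε ≤ q - p) :
    ((∃ v : ℝ, ∃ n : ℝ → ℝ, Calibrates α β ε p q 1 1 v n) ↔
      ((∃ k : ℤ, p = ε * (1/4 + k)) ∧ (∃ k : ℤ, q = ε * (1/4 + k)))) ∧
    (∀ v : ℝ, ∀ n : ℝ → ℝ, Calibrates α β ε p q 1 1 v n → v = (α + β) / 2) := by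
  have hv2 : ∀ v : ℝ, ∀ n : ℝ → ℝ, Calibrates α β ε p q 1 1 v n → v = (α + β) / 2 :=
    fun v n h => calib_velocity hε0 hpq hl h
  refine ⟨⟨?_, ?_⟩, hv2⟩
  · rintro ⟨v, n, hcal⟩
    have hv := hv2 v n hcal
    exact ⟨calib_quarter_p hα hβ hε0 hpq hl hcal hv,
      calib_quarter_q hα hβ hε0 hpq hl hcal hv⟩
  · rintro ⟨hp, hq⟩
    exact ⟨_, _, calib_exists hα hβ hε0 hε hpq hp hq⟩
end

section
/- Let α < 0 < β, 0 < ε < 8/(β−α), and let p < q with ℓ := q − p ≥ ε, p ∈ ε(3/4 + ℤ) and q ∈ ε(1/4 + ℤ). Set v := 2/ℓ + (α+β)/2 − (β−α)ε/(4ℓ). Then the function n(x) := −1 + ∫_p^x (v − g(s/ε)) ds satisfies n(q) = 1 and −1 ≤ n(x) ≤ 1 for every x ∈ [p,q]; in particular the edge [p,q] with endpoint values n(p) = −1, n(q) = 1 (a convex horizontal edge with left endpoint on εI_{β,α} and right endpoint on εI_{α,β}) is calibrable with velocity v. -/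
open MeasureTheory Set

namespace Stmt4Aux

lemma g_add_int (α β x : ℝ) (k : ℤ) : g α β (x + k) = g α β x := by
  unfold g
  rw [round_add_intCast]
  have h : x + (k : ℝ) - ((round x + k : ℤ) : ℝ) = x - (round x : ℝ) := by push_cast; ring
  rw [h]

lemma g_eq_alpha (α β : ℝ) {t : ℝ} (h1 : 3/4 ≤ t) (h2 : t ≤ 5/4) : g α β t = α := by
  have hr : round t = 1 := by
    rw [round_eq, Int.floor_eq_iff]
    constructor <;> push_cast <;> linarith
  unfold g
  rw [hr, if_pos]
  rw [abs_le]
  push_cast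
  constructor <;> linarith

lemma g_eq_beta (α β : ℝ) {t : ℝ} (h1 : 5/4 < t) (h2 : t < 7/4) : g α β t = β := by
  unfold g
  rcases lt_or_ge t (3/2) with h | h
  · have hr : round t = 1 := by
      rw [round_eq, Int.floor_eq_iff]
      constructor <;> push_cast <;> linarith
    rw [hr, if_neg]
    rw [abs_le]
    push_cast
    rintro ⟨h3, h4⟩
    linarith
  · have hr : round t = 2 := by
      rw [round_eq, Int.floor_eq_iff]
      constructor <;> push_cast <;> linarith
    rw [hr, if_neg]
    rw [abs_le]
    push_cast
    rintro ⟨h3, h4⟩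
    linarith

lemma g_eq_alpha' (α β : ℝ) (k : ℤ) {t : ℝ} (h1 : (k : ℝ) + 3/4 ≤ t) (h2 : t ≤ (k : ℝ) + 5/4) :
    g α β t = α := by
  have h := g_add_int α β (t - (k : ℝ)) k
  have he : t - (k : ℝ) + (k : ℝ) = t := by ring
  rw [he] at h
  rw [h]
  exact g_eq_alpha α β (by linarith) (by linarith)

lemma g_eq_beta' (α β : ℝ) (k : ℤ) {t : ℝ} (h1 : (k : ℝ) + 5/4 < t) (h2 : t < (k : ℝ) + 7/4) :
    g α β t = β := by
  have h := g_add_int α β (t - (k : ℝ)) k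
  have he : t - (k : ℝ) + (k : ℝ) = t := by ring
  rw [he] at h
  rw [h]
  exact g_eq_beta α β (by linarith) (by linarith)

lemma g_meas (α β : ℝ) : Measurable (g α β) := by
  have hset : {x : ℝ | |x - (round x : ℝ)| ≤ 1/4} =
      ⋃ k : ℤ, Icc ((k : ℝ) - 1/4) ((k : ℝ) + 1/4) := by
    ext x
    simp only [mem_setOf_eq, mem_iUnion, mem_Icc]
    constructor
    · intro h
      rw [abs_le] at h
      exact ⟨round x, by constructor <;> linarith [h.1, h.2]⟩
    · rintro ⟨k, h1, h2⟩
      have hk : round x = k := by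
        rw [round_eq, Int.floor_eq_iff]
        constructor <;> push_cast <;> linarith
      rw [hk, abs_le]
      constructor <;> linarith
  have hs : MeasurableSet {x : ℝ | |x - (round x : ℝ)| ≤ 1/4} := by
    rw [hset]; exact MeasurableSet.iUnion fun k => measurableSet_Icc
  exact Measurable.ite hs measurable_const measurable_const

lemma g_abs_le (α β t : ℝ) : |g α β t| ≤ |α| + |β| := by
  unfold g
  split
  · linarith [abs_nonneg β]
  · linarith [abs_nonneg α]

lemma gE_meas (α β ε : ℝ) : Measurable (fun s : ℝ => g α β (s / ε)) :=
  (g_meas α β).comp (measurable_id.div_const ε)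

lemma gE_intble (α β ε : ℝ) (a b : ℝ) :
    IntervalIntegrable (fun s : ℝ => g α β (s / ε)) volume a b := by
  constructor <;>
  · refine Integrable.mono' (g := fun _ => |α| + |β|)
      (integrableOn_const measure_Ioc_lt_top.ne)
      ((gE_meas α β ε).aestronglyMeasurable) ?_
    exact Filter.Eventually.of_forall fun t => by
      simpa [Real.norm_eq_abs] using g_abs_le α β (t / ε)

lemma int_alpha (α β : ℝ) {ε : ℝ} (hε0 : 0 < ε) (k : ℤ) {a b : ℝ}
    (ha : ε * ((k : ℝ) + 3/4) ≤ a) (hab : a ≤ b) (hb : b ≤ ε * ((k : ℝ) + 5/4)) :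
    ∫ s in a..b, g α β (s / ε) = α * (b - a) := by
  rw [intervalIntegral.integral_congr (g := fun _ => α) ?_]
  · rw [intervalIntegral.integral_const, smul_eq_mul, mul_comm]
  · intro s hs
    rw [uIcc_of_le hab, mem_Icc] at hs
    refine g_eq_alpha' α β k ?_ ?_
    · rw [le_div_iff₀ hε0]; nlinarith [hs.1]
    · rw [div_le_iff₀ hε0]; nlinarith [hs.2]

lemma int_beta (α β : ℝ) {ε : ℝ} (hε0 : 0 < ε) (k : ℤ) {a b : ℝ}
    (ha : ε * ((k : ℝ) + 5/4) ≤ a) (hab : a ≤ b) (hb : b ≤ ε * ((k : ℝ) + 7/4)) :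
    ∫ s in a..b, g α β (s / ε) = β * (b - a) := by
  rw [intervalIntegral.integral_congr_ae (g := fun _ => β) ?_]
  · rw [intervalIntegral.integral_const, smul_eq_mul, mul_comm]
  · have h0 : ∀ᵐ s : ℝ, s ∉ ({ε * ((k : ℝ) + 7/4)} : Set ℝ) :=
      measure_eq_zero_iff_ae_notMem.mp (measure_singleton _)
    filter_upwards [h0] with s hs hmem
    rw [Set.uIoc_of_le hab, mem_Ioc] at hmem
    have hne : s ≠ ε * ((k : ℝ) + 7/4) := by simpa using hs
    have h1 : ε * ((k : ℝ) + 5/4) < s := lt_of_le_of_lt ha hmem.1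
    have h2 : s < ε * ((k : ℝ) + 7/4) := lt_of_le_of_ne (le_trans hmem.2 hb) hne
    refine g_eq_beta' α β k ?_ ?_
    · rw [lt_div_iff₀ hε0]; nlinarith
    · rw [div_lt_iff₀ hε0]; nlinarith

lemma gE_contAt (α β : ℝ) {ε x : ℝ} (hε0 : 0 < ε)
    (hx : ∀ k : ℤ, x ≠ ε * ((k : ℝ) + 1/4) ∧ x ≠ ε * ((k : ℝ) - 1/4)) :
    ContinuousAt (fun s : ℝ => g α β (s / ε)) x := by
  set t : ℝ := x / ε with ht
  set k : ℤ := round t with hk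
  have habs : |t - (k : ℝ)| ≤ 1/2 := abs_sub_round t
  have hxt : x = t * ε := (div_mul_cancel₀ x hε0.ne').symm
  have hne1 : t - (k : ℝ) ≠ 1/4 := by
    intro h
    exact (hx k).1 (by rw [hxt, show t = (k : ℝ) + 1/4 by linarith]; ring)
  have hne2 : t - (k : ℝ) ≠ -(1/4) := by
    intro h
    exact (hx k).2 (by rw [hxt, show t = (k : ℝ) - 1/4 by linarith]; ring)
  have hdiv : ContinuousAt (fun s : ℝ => s / ε) x := continuousAt_id.div_const ε
  rcases lt_trichotomy (|t - (k : ℝ)|) (1/4) with h | h | h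
  · rw [abs_lt] at h
    have hmem : ∀ᶠ s in nhds x, s / ε ∈ Ioo ((k : ℝ) - 1/4) ((k : ℝ) + 1/4) :=
      hdiv.eventually_mem (Ioo_mem_nhds (by rw [← ht]; linarith [h.1]) (by rw [← ht]; linarith [h.2]))
    have hev : ∀ᶠ s in nhds x, g α β (s / ε) = α := by
      filter_upwards [hmem] with s hs
      exact g_eq_alpha' α β (k - 1) (by push_cast; linarith [hs.1]) (by push_cast; linarith [hs.2])
    exact Filter.EventuallyEq.continuousAt hev
  · rcases (abs_eq (by norm_num : (0:ℝ) ≤ 1/4)).mp h with h' | h'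
    · exact absurd h' hne1
    · exact absurd h' hne2
  · rcases lt_abs.mp h with h' | h'
    · have hmem : ∀ᶠ s in nhds x, s / ε ∈ Ioo ((k : ℝ) + 1/4) ((k : ℝ) + 3/4) :=
        hdiv.eventually_mem (Ioo_mem_nhds (by rw [← ht]; linarith)
          (by rw [← ht]; have := abs_le.mp habs; linarith [this.2]))
      have hev : ∀ᶠ s in nhds x, g α β (s / ε) = β := by
        filter_upwards [hmem] with s hs
        exact g_eq_beta' α β (k - 1) (by push_cast; linarith [hs.1]) (by push_cast; linarith [hs.2])
      exact Filter.EventuallyEq.continuousAt hev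
    · have hmem : ∀ᶠ s in nhds x, s / ε ∈ Ioo ((k : ℝ) - 3/4) ((k : ℝ) - 1/4) :=
        hdiv.eventually_mem (Ioo_mem_nhds
          (by rw [← ht]; have := abs_le.mp habs; linarith [this.1]) (by rw [← ht]; linarith))
      have hev : ∀ᶠ s in nhds x, g α β (s / ε) = β := by
        filter_upwards [hmem] with s hs
        exact g_eq_beta' α β (k - 2) (by push_cast; linarith [hs.1]) (by push_cast; linarith [hs.2])
      exact Filter.EventuallyEq.continuousAt hev

end Stmt4Aux

open Stmt4Aux in
set_option maxHeartbeats 2000000 in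
theorem stmt4 (α β ε p q v : ℝ) (hα : α < 0) (hβ : 0 < β)
    (hε0 : 0 < ε) (hε : ε < 8 / (β - α)) (hpq : p < q) (hl : ε ≤ q - p)
    (hp : ∃ k : ℤ, p = ε * (3/4 + k)) (hq : ∃ k : ℤ, q = ε * (1/4 + k))
    (hv : v = 2 / (q - p) + (α + β) / 2 - (β - α) * ε / (4 * (q - p)))
    (n : ℝ → ℝ) (hn : n = fun x => -1 + ∫ s in p..x, (v - g α β (s / ε))) :
    n q = 1 ∧ (∀ x ∈ Icc p q, -1 ≤ n x ∧ n x ≤ 1) ∧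
    Calibrates α β ε p q (-1) 1 v n := by
  obtain ⟨kp, hkp⟩ := hp
  obtain ⟨kq, hkq⟩ := hq
  have hℓpos : 0 < q - p := by linarith
  set m : ℤ := kq - kp with hmdef
  have hqp : q - p = ε * ((m : ℝ) - 1/2) := by
    rw [hkp, hkq, hmdef]; push_cast; ring
  have hβα : 0 < β - α := by linarith
  have h8 : ε * (β - α) < 8 := by
    have := (lt_div_iff₀ hβα).mp hε; linarith
  have hm2 : (2 : ℤ) ≤ m := by
    have h32 : (3 : ℝ)/2 ≤ (m : ℝ) := by nlinarith [hqp ▸ hl]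
    have h1 : (1 : ℤ) < m := by exact_mod_cast lt_of_lt_of_le (by norm_num : (1:ℝ) < 3/2) h32
    omega
  have hℓv : (q - p) * v = 2 + (q - p) * (α + β) / 2 - (β - α) * ε / 4 := by
    rw [hv]; field_simp
  set c : ℝ := ε * (v - (α + β)/2) with hcdef
  have hvm : 0 < v - (α + β)/2 := by
    have h2 : (q - p) * (v - (α + β)/2) = 2 - (β - α) * ε / 4 := by linear_combination hℓv
    have h3 : 0 < 2 - (β - α) * ε / 4 := by linarith
    by_contra hcon
    push_neg at hcon
    nlinarith
  have hc0 : 0 ≤ c := by rw [hcdef]; positivity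
  have hvα : 0 ≤ v - α := by linarith
  have hkey : ((m : ℝ) - 1) * c + ε/2 * (v - α) = 2 := by
    rw [hcdef]
    linear_combination hℓv - (v - (α + β)/2) * hqp
  have hgint : ∀ a b : ℝ, IntervalIntegrable (fun s : ℝ => g α β (s / ε)) volume a b :=
    gE_intble α β ε
  have hfint : ∀ a b : ℝ, IntervalIntegrable (fun s : ℝ => v - g α β (s / ε)) volume a b :=
    fun a b => intervalIntegrable_const.sub (hgint a b)
  set G : ℝ → ℝ := fun x => ∫ s in p..x, g α β (s / ε) with hGdef
  have hnG : ∀ x, n x = -1 + (v * (x - p) - G x) := by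
    intro x
    rw [hn]
    simp only [hGdef]
    rw [intervalIntegral.integral_sub intervalIntegrable_const (hgint p x),
      intervalIntegral.integral_const, smul_eq_mul]
    ring
  have hGsplit : ∀ a b : ℝ, G b = G a + ∫ s in a..b, g α β (s / ε) := by
    intro a b
    simp only [hGdef]
    exact (intervalIntegral.integral_add_adjacent_intervals (hgint p a) (hgint a b)).symm
  -- value at period points
  have hphase : ∀ jj : ℤ, p + (jj : ℝ) * ε = ε * (((kp + jj : ℤ) : ℝ) + 3/4) := by
    intro jj; rw [hkp]; push_cast; ring
  have hGstep : ∀ jj : ℤ, G (p + (jj : ℝ) * ε + ε) = G (p + (jj : ℝ) * ε) + ε * (α + β) / 2 := by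
    intro jj
    set s0 : ℝ := p + (jj : ℝ) * ε with hs0
    have e1 : G (s0 + ε/2) = G s0 + α * (ε/2) := by
      rw [hGsplit s0 (s0 + ε/2),
        int_alpha α β hε0 (kp + jj) (le_of_eq (hphase jj).symm) (by linarith)
          (by rw [hs0, hphase jj]; push_cast; ring_nf; linarith)]
      ring
    have e2 : G (s0 + ε) = G (s0 + ε/2) + β * (ε/2) := by
      rw [hGsplit (s0 + ε/2) (s0 + ε),
        int_beta α β hε0 (kp + jj) (by rw [hs0, hphase jj]; push_cast; ring_nf; linarith)
          (by linarith) (by rw [hs0, hphase jj]; push_cast; ring_nf; linarith)]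
      ring
    rw [e2, e1]; ring
  have hGj : ∀ j : ℕ, G (p + (j : ℝ) * ε) = (j : ℝ) * (ε * (α + β) / 2) := by
    intro j
    induction j with
    | zero => simp [hGdef]
    | succ j ih =>
      have h := hGstep (j : ℤ)
      push_cast at h ⊢
      have he : p + ((j : ℝ) + 1) * ε = p + (j : ℝ) * ε + ε := by ring
      rw [he, h, ih]; ring
  have hGjZ : ∀ jj : ℤ, 0 ≤ jj → G (p + (jj : ℝ) * ε) = (jj : ℝ) * (ε * (α + β) / 2) := by
    intro jj hjj
    have h := hGj jj.toNat
    have hcast : ((jj.toNat : ℕ) : ℝ) = (jj : ℝ) := by exact_mod_cast Int.toNat_of_nonneg hjj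
    rwa [hcast] at h
  -- n q = 1
  have hnq : n q = 1 := by
    have hm1 : (0 : ℤ) ≤ m - 1 := by omega
    have hqe : q = p + ((m - 1 : ℤ) : ℝ) * ε + ε/2 := by
      rw [hkp, hkq, hmdef]; push_cast; ring
    have hGq : G q = G (p + ((m - 1 : ℤ) : ℝ) * ε) + α * (ε/2) := by
      rw [hGsplit (p + ((m - 1 : ℤ) : ℝ) * ε) q,
        int_alpha α β hε0 (kp + (m - 1)) (le_of_eq (hphase (m - 1)).symm)
          (by rw [hqe]; linarith)
          (by rw [hqe, hphase (m - 1)]; push_cast; ring_nf; linarith)]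
      rw [hqe]; ring
    have hGm : G (p + ((m - 1 : ℤ) : ℝ) * ε) = ((m : ℝ) - 1) * (ε * (α + β) / 2) := by
      have h := hGjZ (m - 1) hm1
      push_cast at h
      convert h using 2 <;> push_cast <;> ring
    rw [hnG q, hGq, hGm, hqp]
    push_cast
    linear_combination hkey + ((m : ℝ) - 1) * hcdef
  -- bounds
  have hbound : ∀ x ∈ Icc p q, -1 ≤ n x ∧ n x ≤ 1 := by
    rintro x ⟨hx1, hx2⟩
    set j : ℤ := ⌊(x - p) / ε⌋ with hjdef
    have hj0 : 0 ≤ j := Int.floor_nonneg.mpr (div_nonneg (by linarith) hε0.le)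
    have hj0r : (0 : ℝ) ≤ (j : ℝ) := by exact_mod_cast hj0
    have hjle : (j : ℝ) ≤ (x - p) / ε := Int.floor_le _
    have hjlt : (x - p) / ε < (j : ℝ) + 1 := Int.lt_floor_add_one _
    have hsle : p + (j : ℝ) * ε ≤ x := by
      have h1 : (j : ℝ) * ε ≤ x - p := (le_div_iff₀ hε0).mp hjle
      linarith
    have hslt : x < p + (j : ℝ) * ε + ε := by
      have h1 : x - p < ((j : ℝ) + 1) * ε := (div_lt_iff₀ hε0).mp hjlt
      linarith
    have hjm : (j : ℝ) ≤ (m : ℝ) - 1 := by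
      have h1 : (j : ℝ) ≤ (m : ℝ) - 1/2 := by
        refine le_trans hjle ?_
        rw [div_le_iff₀ hε0]
        calc x - p ≤ q - p := by linarith
          _ = ((m : ℝ) - 1/2) * ε := by rw [hqp]; ring
      have h2 : j < m := by exact_mod_cast lt_of_le_of_lt h1 (by linarith : (m : ℝ) - 1/2 < m)
      have h3 : j ≤ m - 1 := by omega
      exact_mod_cast h3
    have hGs : G (p + (j : ℝ) * ε) = (j : ℝ) * (ε * (α + β) / 2) := hGjZ j hj0
    rcases le_or_gt x (p + (j : ℝ) * ε + ε/2) with hcase | hcase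
    · -- first half of the period: slope v - α
      have hGA : G x = G (p + (j : ℝ) * ε) + α * (x - (p + (j : ℝ) * ε)) := by
        rw [hGsplit (p + (j : ℝ) * ε) x,
          int_alpha α β hε0 (kp + j) (le_of_eq (hphase j).symm) hsle
            (by rw [hphase j] at hcase; push_cast at hcase ⊢; linarith)]
      have hnx : n x = -1 + (j : ℝ) * c + (x - (p + (j : ℝ) * ε)) * (v - α) := by
        rw [hnG x, hGA, hGs, hcdef]; ring
      constructor
      · rw [hnx]
        nlinarith [mul_nonneg hj0r hc0, mul_nonneg (by linarith : (0:ℝ) ≤ x - (p + (j : ℝ) * ε)) hvα]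
      · rw [hnx]
        have h1 : (j : ℝ) * c ≤ ((m : ℝ) - 1) * c := mul_le_mul_of_nonneg_right hjm hc0
        have h2 : (x - (p + (j : ℝ) * ε)) * (v - α) ≤ ε/2 * (v - α) :=
          mul_le_mul_of_nonneg_right (by linarith) hvα
        linarith [hkey]
    · -- second half of the period: slope v - β
      have hjm2 : (j : ℝ) + 1 ≤ (m : ℝ) - 1 := by
        have h1 : (j : ℝ) < (m : ℝ) - 1 := by
          have hx2' : x - p ≤ ε * ((m : ℝ) - 1/2) := by rw [← hqp]; linarith
          by_contra hcon
          push_neg at hcon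
          nlinarith
        have h2 : j < m - 1 := by exact_mod_cast h1
        have h3 : j + 1 ≤ m - 1 := by omega
        calc ((j : ℝ) + 1) = ((j + 1 : ℤ) : ℝ) := by push_cast; ring
          _ ≤ ((m - 1 : ℤ) : ℝ) := by exact_mod_cast h3
          _ = (m : ℝ) - 1 := by push_cast; ring
      have hGhalf : G (p + (j : ℝ) * ε + ε/2) = G (p + (j : ℝ) * ε) + α * (ε/2) := by
        rw [hGsplit (p + (j : ℝ) * ε) (p + (j : ℝ) * ε + ε/2),
          int_alpha α β hε0 (kp + j) (a := p + (j : ℝ) * ε) (b := p + (j : ℝ) * ε + ε/2)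
            (le_of_eq (hphase j).symm) (by linarith)
            (by have h := hphase j; push_cast at h ⊢; linarith)]
        ring
      have hGB : G x = G (p + (j : ℝ) * ε) + α * (ε/2) + β * (x - (p + (j : ℝ) * ε) - ε/2) := by
        rw [hGsplit (p + (j : ℝ) * ε + ε/2) x,
          int_beta α β hε0 (kp + j) (a := p + (j : ℝ) * ε + ε/2) (b := x)
            (by have h := hphase j; push_cast at h ⊢; linarith)
            hcase.le (by have h := hphase j; push_cast at h ⊢; linarith), hGhalf]
        ring
      have hnx : n x = -1 + (j : ℝ) * c + ε/2 * (v - α)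
          + (x - (p + (j : ℝ) * ε) - ε/2) * (v - β) := by
        rw [hnG x, hGB, hGs, hcdef]; ring
      have hu0 : 0 < x - (p + (j : ℝ) * ε) - ε/2 := by linarith
      have hu1 : x - (p + (j : ℝ) * ε) - ε/2 < ε/2 := by linarith
      have hcc : ε/2 * (v - α) + ε/2 * (v - β) = c := by rw [hcdef]; ring
      constructor
      · rcases le_or_gt β v with hvβ | hvβ
        · rw [hnx]
          nlinarith [mul_nonneg hj0r hc0, mul_nonneg hu0.le (by linarith : (0:ℝ) ≤ v - β), hε0.le]
        · rw [hnx]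
          have h1 : ε/2 * (v - β) ≤ (x - (p + (j : ℝ) * ε) - ε/2) * (v - β) := by
            nlinarith
          have h2 : (0 : ℝ) ≤ ((j : ℝ) + 1) * c := by positivity
          nlinarith [mul_nonneg hj0r hc0]
      · rcases le_or_gt v β with hvβ | hvβ
        · rw [hnx]
          have h1 : (j : ℝ) * c ≤ ((m : ℝ) - 1) * c := mul_le_mul_of_nonneg_right hjm hc0
          have h2 : (x - (p + (j : ℝ) * ε) - ε/2) * (v - β) ≤ 0 :=
            mul_nonpos_of_nonneg_of_nonpos hu0.le (by linarith)
          linarith [hkey]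
        · rw [hnx]
          have h1 : (x - (p + (j : ℝ) * ε) - ε/2) * (v - β) ≤ ε/2 * (v - β) := by
            nlinarith
          have h2 : ((j : ℝ) + 1) * c ≤ ((m : ℝ) - 1) * c := mul_le_mul_of_nonneg_right hjm2 hc0
          have h3 : 0 ≤ ε/2 * (v - α) := by positivity
          nlinarith [hkey]
  refine ⟨hnq, hbound, ?_, ?_, ?_, hnq, ?_⟩
  · -- Lipschitz
    refine ⟨⟨|v| + |α| + |β|, by positivity⟩, LipschitzOnWith.of_dist_le_mul fun x hx y hy => ?_⟩
    have hsub : n x - n y = ∫ s in y..x, (v - g α β (s / ε)) := by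
      rw [hn]
      simp only
      have := intervalIntegral.integral_interval_sub_left (hfint p x) (hfint p y)
      linarith [this]
    rw [Real.dist_eq, Real.dist_eq, hsub]
    have hC := intervalIntegral.norm_integral_le_of_norm_le_const
      (C := |v| + |α| + |β|) (f := fun s : ℝ => v - g α β (s / ε)) (a := y) (b := x) ?_
    · change _ ≤ (|v| + |α| + |β|) * _
      simpa [Real.norm_eq_abs, abs_sub_comm x y, NNReal.coe_mk] using hC
    · intro s _
      have h1 := g_abs_le α β (s / ε)
      have h2 : |v - g α β (s / ε)| ≤ |v| + |g α β (s / ε)| := abs_sub _ _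
      rw [Real.norm_eq_abs]
      linarith
  · -- membership
    intro x hx
    exact hbound x hx
  · -- n p = -1
    rw [hn]
    show -1 + ∫ s in p..p, (v - g α β (s / ε)) = -1
    rw [intervalIntegral.integral_same]
    ring
  · -- a.e. derivative
    have hcount : Set.Countable {x : ℝ | ∃ k : ℤ, x = ε * ((k : ℝ) + 1/4) ∨ x = ε * ((k : ℝ) - 1/4)} := by
      have hset : {x : ℝ | ∃ k : ℤ, x = ε * ((k : ℝ) + 1/4) ∨ x = ε * ((k : ℝ) - 1/4)} =
          ⋃ k : ℤ, {ε * ((k : ℝ) + 1/4), ε * ((k : ℝ) - 1/4)} := by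
        ext x
        simp only [mem_setOf_eq, mem_iUnion, mem_insert_iff, mem_singleton_iff]
      rw [hset]
      exact countable_iUnion fun k => ((countable_singleton _).insert _)
    have hE : ∀ᵐ x : ℝ, ∀ k : ℤ, x ≠ ε * ((k : ℝ) + 1/4) ∧ x ≠ ε * ((k : ℝ) - 1/4) := by
      have h0 := measure_eq_zero_iff_ae_notMem.mp (hcount.measure_zero (μ := volume))
      filter_upwards [h0] with x hx k
      have hx' : ¬ ∃ k : ℤ, x = ε * ((k : ℝ) + 1/4) ∨ x = ε * ((k : ℝ) - 1/4) := hx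
      push_neg at hx'
      exact hx' k
    refine ae_restrict_of_ae ?_
    filter_upwards [hE] with x hx
    have hcont : ContinuousAt (fun s : ℝ => v - g α β (s / ε)) x :=
      continuousAt_const.sub (gE_contAt α β hε0 hx)
    have hmeasf : StronglyMeasurableAtFilter (fun s : ℝ => v - g α β (s / ε)) (nhds x) volume :=
      ⟨univ, Filter.univ_mem, ((measurable_const.sub (gE_meas α β ε)).aestronglyMeasurable).restrict⟩
    have hd := intervalIntegral.integral_hasDerivAt_right (hfint p x) hmeasf hcont
    rw [hn]
    exact hd.const_add (-1)
end
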